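/- arXiv:0708.3649 — 3 statements merged into one kernel-verified Lean document; each statement's English description precedes it below -/
import Mathlib

section
/- Let F and G be two bicomplex functions defined on a domain D₀ ⊆ 𝕋, with idempotent components F_{e1} = P₁∘F, F_{e2} = P₂∘F, G_{e1} = P₁∘G, G_{e2} = P₂∘G. If for every ω ∈ D₀ one has Im{conj(F_{e1}(ω))·G_{e1}(ω)} ≠ 0 or Im{conj(F_{e2}(ω))·G_{e2}(ω)} ≠ 0, then Vec{F(ω)†₃G(ω)} ≠ 0 for all ω ∈ D₀. -/
noncomputable section

open Complex Filter Topology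

/-- The bicomplex numbers `𝕋 = {z₁ + z₂ i₂ : z₁, z₂ ∈ ℂ(i₁)}`, represented by the pair
of `ℂ(i₁)`-components `(z₁, z₂)`. -/
@[ext] structure Bicomplex : Type where
  z1 : ℂ
  z2 : ℂ

namespace Bicomplex

instance : Zero Bicomplex := ⟨⟨0, 0⟩⟩
instance : One Bicomplex := ⟨⟨1, 0⟩⟩
instance : Add Bicomplex := ⟨fun w v => ⟨w.z1 + v.z1, w.z2 + v.z2⟩⟩
instance : Neg Bicomplex := ⟨fun w => ⟨-w.z1, -w.z2⟩⟩
instance : Mul Bicomplex := ⟨fun w v => ⟨w.z1 * v.z1 - w.z2 * v.z2, w.z1 * v.z2 + w.z2 * v.z1⟩⟩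

@[simp] lemma zero_z1 : (0 : Bicomplex).z1 = 0 := rfl
@[simp] lemma zero_z2 : (0 : Bicomplex).z2 = 0 := rfl
@[simp] lemma one_z1 : (1 : Bicomplex).z1 = 1 := rfl
@[simp] lemma one_z2 : (1 : Bicomplex).z2 = 0 := rfl
@[simp] lemma add_z1 (w v : Bicomplex) : (w + v).z1 = w.z1 + v.z1 := rfl
@[simp] lemma add_z2 (w v : Bicomplex) : (w + v).z2 = w.z2 + v.z2 := rfl
@[simp] lemma neg_z1 (w : Bicomplex) : (-w).z1 = -w.z1 := rfl
@[simp] lemma neg_z2 (w : Bicomplex) : (-w).z2 = -w.z2 := rfl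
@[simp] lemma mul_z1 (w v : Bicomplex) : (w * v).z1 = w.z1 * v.z1 - w.z2 * v.z2 := rfl
@[simp] lemma mul_z2 (w v : Bicomplex) : (w * v).z2 = w.z1 * v.z2 + w.z2 * v.z1 := rfl

/-- The bicomplex numbers form a commutative ring. -/
instance : CommRing Bicomplex where
  nsmul n w := ⟨n • w.z1, n • w.z2⟩
  zsmul n w := ⟨n • w.z1, n • w.z2⟩
  nsmul_zero a := by ext <;> exact zero_smul _ _
  nsmul_succ n a := by ext <;> exact succ_nsmul _ _
  zsmul_zero' a := by ext <;> exact zero_smul _ _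
  zsmul_succ' n a := by ext <;> exact SubNegMonoid.zsmul_succ' _ _
  zsmul_neg' n a := by ext <;> exact SubNegMonoid.zsmul_neg' _ _
  add_assoc a b c := by ext <;> simp <;> ring
  zero_add a := by ext <;> simp
  add_zero a := by ext <;> simp
  add_comm a b := by ext <;> simp <;> ring
  neg_add_cancel a := by ext <;> simp
  mul_assoc a b c := by ext <;> simp <;> ring
  one_mul a := by ext <;> simp
  mul_one a := by ext <;> simp
  left_distrib a b c := by ext <;> simp <;> ring
  right_distrib a b c := by ext <;> simp <;> ring
  zero_mul a := by ext <;> simp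
  mul_zero a := by ext <;> simp
  mul_comm a b := by ext <;> simp <;> ring

/-- Inverse: `w⁻¹ = w†₂ / (z₁² + z₂²)` (junk value `0/0` on the null-cone). -/
instance : Inv Bicomplex :=
  ⟨fun w => ⟨w.z1 / (w.z1 ^ 2 + w.z2 ^ 2), -w.z2 / (w.z1 ^ 2 + w.z2 ^ 2)⟩⟩

instance : Div Bicomplex := ⟨fun w v => w * v⁻¹⟩

/-- Embedding of `ℂ(i₁)` into `𝕋`. -/
def ofComplex (c : ℂ) : Bicomplex := ⟨c, 0⟩

/-- Embedding of `ℝ` into `𝕋`. -/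
def ofReal (t : ℝ) : Bicomplex := ⟨(t : ℂ), 0⟩

/-- The imaginary unit `i₁`. -/
def i1 : Bicomplex := ⟨Complex.I, 0⟩

/-- The imaginary unit `i₂`. -/
def i2 : Bicomplex := ⟨0, 1⟩

/-- The hyperbolic unit `j = i₁ i₂`. -/
def jj : Bicomplex := ⟨0, Complex.I⟩

/-- The idempotent `e₁ = (1 + j)/2`. -/
def e1 : Bicomplex := ⟨1 / 2, Complex.I / 2⟩

/-- The idempotent `e₂ = (1 - j)/2`. -/
def e2 : Bicomplex := ⟨1 / 2, -(Complex.I) / 2⟩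

/-- The projection `P₁(z₁ + z₂ i₂) = z₁ - z₂ i₁`. -/
def P1 (w : Bicomplex) : ℂ := w.z1 - w.z2 * Complex.I

/-- The projection `P₂(z₁ + z₂ i₂) = z₁ + z₂ i₁`. -/
def P2 (w : Bicomplex) : ℂ := w.z1 + w.z2 * Complex.I

/-- The conjugation `w†₁ = z̄₁ + z̄₂ i₂`. -/
def dag1 (w : Bicomplex) : Bicomplex := ⟨(starRingEnd ℂ) w.z1, (starRingEnd ℂ) w.z2⟩

/-- The conjugation `w†₂ = z₁ - z₂ i₂`. -/
def dag2 (w : Bicomplex) : Bicomplex := ⟨w.z1, -w.z2⟩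

/-- The conjugation `w†₃ = z̄₁ - z̄₂ i₂`. -/
def dag3 (w : Bicomplex) : Bicomplex := ⟨(starRingEnd ℂ) w.z1, -((starRingEnd ℂ) w.z2)⟩

/-- `𝕋` as `ℂ × ℂ`. -/
def toProd (w : Bicomplex) : ℂ × ℂ := (w.z1, w.z2)

/-- `ℂ × ℂ` as `𝕋`. -/
def ofProd (p : ℂ × ℂ) : Bicomplex := ⟨p.1, p.2⟩

instance : TopologicalSpace Bicomplex := TopologicalSpace.induced toProd inferInstance

/-- The set of points `w` such that `w - w₀` is invertible (i.e. not a zero divisor). -/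
def invertibleDiff (w₀ : Bicomplex) : Set Bicomplex :=
  {w | (w - w₀).z1 ^ 2 + (w - w₀).z2 ^ 2 ≠ 0}

/-- `f` is `𝕋`-differentiable at `w₀` with derivative `d`:
`(f w - f w₀)/(w - w₀) → d` as `w → w₀` with `w - w₀` invertible. -/
def HasTDerivAt (f : Bicomplex → Bicomplex) (d w₀ : Bicomplex) : Prop :=
  Tendsto (fun w => (f w - f w₀) / (w - w₀)) (𝓝[invertibleDiff w₀] w₀) (𝓝 d)

/-- `f` is `𝕋`-holomorphic on `U` if it is `𝕋`-differentiable at each point of `U`. -/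
def THolomorphicOn (f : Bicomplex → Bicomplex) (U : Set Bicomplex) : Prop :=
  ∀ w ∈ U, ∃ d, HasTDerivAt f d w

/-- `f` viewed as a map `ℂ² → ℂ²`. -/
def fProd (f : Bicomplex → Bicomplex) : ℂ × ℂ → ℂ × ℂ := fun p => toProd (f (ofProd p))

/-- `f : 𝕋 → 𝕋` is `n` times continuously (real-)differentiable on `U`. -/
def TContDiffOn (n : ℕ∞) (f : Bicomplex → Bicomplex) (U : Set Bicomplex) : Prop :=
  ContDiffOn ℝ n (fProd f) (toProd '' U)

/-- `g : 𝕋 → ℂ` is `n` times continuously (real-)differentiable on `U`. -/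
def CContDiffOn (n : ℕ∞) (g : Bicomplex → ℂ) (U : Set Bicomplex) : Prop :=
  ContDiffOn ℝ n (fun p => g (ofProd p)) (toProd '' U)

/-- Real partial derivative of `g : 𝕋 → ℂ` at `w` in direction `e`. -/
def pd (e : Bicomplex) (g : Bicomplex → ℂ) (w : Bicomplex) : ℂ :=
  deriv (fun t : ℝ => g (w + ofReal t * e)) 0

/-- Existence of the real partial derivative of `g : 𝕋 → ℂ` at `w` in direction `e`. -/
def pdExists (e : Bicomplex) (g : Bicomplex → ℂ) (w : Bicomplex) : Prop :=
  DifferentiableAt ℝ (fun t : ℝ => g (w + ofReal t * e)) 0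

/-- The scalar (`ℂ(i₁)`-) component `f₁` of `f = f₁ + f₂ i₂`. -/
def s1 (f : Bicomplex → Bicomplex) : Bicomplex → ℂ := fun w => (f w).z1

/-- The vectorial (`ℂ(i₁)`-) component `f₂` of `f = f₁ + f₂ i₂`. -/
def s2 (f : Bicomplex → Bicomplex) : Bicomplex → ℂ := fun w => (f w).z2

/-- Real partial derivative of `f : 𝕋 → 𝕋` in direction `e`. -/
def pdT (e : Bicomplex) (f : Bicomplex → Bicomplex) : Bicomplex → Bicomplex :=
  fun w => ⟨pd e (s1 f) w, pd e (s2 f) w⟩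

/-- Existence of the real partial derivative of `f : 𝕋 → 𝕋` in direction `e`. -/
def pdTExists (e : Bicomplex) (f : Bicomplex → Bicomplex) (w : Bicomplex) : Prop :=
  pdExists e (s1 f) w ∧ pdExists e (s2 f) w

/-- `∂_{z₁} g = ½(∂ₓ g - i₁ ∂_y g)` for `g : 𝕋 → ℂ`. -/
def dz1 (g : Bicomplex → ℂ) : Bicomplex → ℂ :=
  fun w => (pd 1 g w - Complex.I * pd i1 g w) / 2

/-- `∂_{z̄₁} g = ½(∂ₓ g + i₁ ∂_y g)` for `g : 𝕋 → ℂ`. -/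
def dz1bar (g : Bicomplex → ℂ) : Bicomplex → ℂ :=
  fun w => (pd 1 g w + Complex.I * pd i1 g w) / 2

/-- `∂_{z₂} g = ½(∂_p g - i₁ ∂_q g)` for `g : 𝕋 → ℂ`. -/
def dz2 (g : Bicomplex → ℂ) : Bicomplex → ℂ :=
  fun w => (pd i2 g w - Complex.I * pd jj g w) / 2

/-- `∂_{z̄₂} g = ½(∂_p g + i₁ ∂_q g)` for `g : 𝕋 → ℂ`. -/
def dz2bar (g : Bicomplex → ℂ) : Bicomplex → ℂ :=
  fun w => (pd i2 g w + Complex.I * pd jj g w) / 2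

/-- `∂_{z₁}` applied componentwise to `f : 𝕋 → 𝕋`. -/
def dZ1 (f : Bicomplex → Bicomplex) : Bicomplex → Bicomplex :=
  fun w => ⟨dz1 (s1 f) w, dz1 (s2 f) w⟩

/-- `∂_{z₂}` applied componentwise to `f : 𝕋 → 𝕋`. -/
def dZ2 (f : Bicomplex → Bicomplex) : Bicomplex → Bicomplex :=
  fun w => ⟨dz2 (s1 f) w, dz2 (s2 f) w⟩

/-- `∂_{z̄₁}` applied componentwise to `f : 𝕋 → 𝕋`. -/
def dZ1bar (f : Bicomplex → Bicomplex) : Bicomplex → Bicomplex :=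
  fun w => ⟨dz1bar (s1 f) w, dz1bar (s2 f) w⟩

/-- `∂_{z̄₂}` applied componentwise to `f : 𝕋 → 𝕋`. -/
def dZ2bar (f : Bicomplex → Bicomplex) : Bicomplex → Bicomplex :=
  fun w => ⟨dz2bar (s1 f) w, dz2bar (s2 f) w⟩

/-- `∂_ω = ½(∂_{z₁} - i₂ ∂_{z₂})`. -/
def dOm (f : Bicomplex → Bicomplex) : Bicomplex → Bicomplex :=
  fun w => ofComplex (1 / 2) * (dZ1 f w - i2 * dZ2 f w)

/-- `∂_{ω†₂} = ∂_ω̄ = ½(∂_{z₁} + i₂ ∂_{z₂})`. -/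
def dOmBar (f : Bicomplex → Bicomplex) : Bicomplex → Bicomplex :=
  fun w => ofComplex (1 / 2) * (dZ1 f w + i2 * dZ2 f w)

/-- `∂_{ω†₁} = ½(∂_{z̄₁} - i₂ ∂_{z̄₂})`. -/
def dOmDag1 (f : Bicomplex → Bicomplex) : Bicomplex → Bicomplex :=
  fun w => ofComplex (1 / 2) * (dZ1bar f w - i2 * dZ2bar f w)

/-- `∂_{ω†₃} = ½(∂_{z̄₁} + i₂ ∂_{z̄₂})`. -/
def dOmDag3 (f : Bicomplex → Bicomplex) : Bicomplex → Bicomplex :=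
  fun w => ofComplex (1 / 2) * (dZ1bar f w + i2 * dZ2bar f w)

/-- The complexified Laplacian `Δ_ℂ = ∂²_{z₁} + ∂²_{z₂}` acting on `ℂ(i₁)`-valued functions. -/
def lapC (g : Bicomplex → ℂ) : Bicomplex → ℂ :=
  fun w => dz1 (dz1 g) w + dz2 (dz2 g) w

/-- The vector part in the `i₂`-representation `w = ζ₁ + ζ₂ i₁` with `ζ₁, ζ₂ ∈ ℂ(i₂)`:
for `w = x₁ + x₂i₁ + x₃i₂ + x₄j`, `Vec(w) = x₂ + x₄ i₂`, encoded as the complex number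
`x₂ + x₄ i`. -/
def vec2 (w : Bicomplex) : ℂ := ⟨w.z1.im, w.z2.im⟩

/-- Embedding of `ℂ(i₂)` into `𝕋`: the complex number `a + b i` represents `a + b i₂`. -/
def ofC2 (c : ℂ) : Bicomplex := ⟨(c.re : ℂ), (c.im : ℂ)⟩

/-- Multiplication of hyperbolic numbers `ℂ(j) = {x + yj}`, encoded as pairs in `ℝ × ℝ`. -/
def hmul (a b : ℝ × ℝ) : ℝ × ℝ := (a.1 * b.1 + a.2 * b.2, a.1 * b.2 + a.2 * b.1)

/-- Division of hyperbolic numbers (junk value when the denominator is a zero divisor). -/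
def hdiv (a b : ℝ × ℝ) : ℝ × ℝ :=
  hmul a (b.1 / (b.1 ^ 2 - b.2 ^ 2), -b.2 / (b.1 ^ 2 - b.2 ^ 2))

/-- Embedding of the hyperbolic numbers `ℂ(j)` into `𝕋`: `(x, y) ↦ x + y j`. -/
def ofHyp (a : ℝ × ℝ) : Bicomplex := ⟨(a.1 : ℂ), (a.2 : ℂ) * Complex.I⟩

/-- The vector part in the `j`-representation `w = ζ₁ + ζ₂ i₁` with `ζ₁, ζ₂ ∈ ℂ(j)`:
for `w = x₁ + x₂i₁ + x₃i₂ + x₄j`, `Vec(w) = x₂ - x₃ j`, encoded as the pair `(x₂, -x₃)`. -/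
def vec3 (w : Bicomplex) : ℝ × ℝ := (w.z1.im, -w.z2.re)

/-- The `𝕋`-cartesian set `X₁ ×ₑ X₂ = {w : P₁ w ∈ X₁ ∧ P₂ w ∈ X₂}`. -/
def eProd (X₁ X₂ : Set ℂ) : Set Bicomplex := {w | P1 w ∈ X₁ ∧ P2 w ∈ X₂}

/-- `(F, G)` is an `i₁`-generating pair on `D`. -/
def GenPair1 (F G : Bicomplex → Bicomplex) (D : Set Bicomplex) : Prop :=
  TContDiffOn 2 F D ∧ TContDiffOn 2 G D ∧ ∀ w ∈ D, (dag2 (F w) * G w).z2 ≠ 0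

/-- `(F, G)` is an `i₂`-generating pair on `D`. -/
def GenPair2 (F G : Bicomplex → Bicomplex) (D : Set Bicomplex) : Prop :=
  TContDiffOn 2 F D ∧ TContDiffOn 2 G D ∧ ∀ w ∈ D, vec2 (dag1 (F w) * G w) ≠ 0

/-- `(F, G)` is a `j`-generating pair on `D`. -/
def GenPairJ (F G : Bicomplex → Bicomplex) (D : Set Bicomplex) : Prop :=
  TContDiffOn 2 F D ∧ TContDiffOn 2 G D ∧ ∀ w ∈ D, vec3 (dag3 (F w) * G w) ≠ 0

/-- The unique `λ₀ ∈ ℂ(i₁)` with `w(ω₀) = λ₀ F(ω₀) + μ₀ G(ω₀)`. -/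
def lam1 (F G wf : Bicomplex → Bicomplex) (ω₀ : Bicomplex) : ℂ :=
  (dag2 (wf ω₀) * G ω₀).z2 / (dag2 (F ω₀) * G ω₀).z2

/-- The unique `μ₀ ∈ ℂ(i₁)` with `w(ω₀) = λ₀ F(ω₀) + μ₀ G(ω₀)`. -/
def mu1 (F G wf : Bicomplex → Bicomplex) (ω₀ : Bicomplex) : ℂ :=
  -((dag2 (wf ω₀) * F ω₀).z2 / (dag2 (F ω₀) * G ω₀).z2)

/-- `w` has `(F,G)_{i₁}`-derivative `d` at `ω₀`. -/
def HasFGDeriv1 (F G wf : Bicomplex → Bicomplex) (d ω₀ : Bicomplex) : Prop :=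
  Tendsto
    (fun ω => (wf ω - ofComplex (lam1 F G wf ω₀) * F ω - ofComplex (mu1 F G wf ω₀) * G ω)
        / (ω - ω₀))
    (𝓝[invertibleDiff ω₀] ω₀) (𝓝 d)

/-- The unique `λ₀ ∈ ℂ(j)` with `w(ω₀) = λ₀ F(ω₀) + μ₀ G(ω₀)`. -/
def lamJ (F G wf : Bicomplex → Bicomplex) (ω₀ : Bicomplex) : ℝ × ℝ :=
  hdiv (vec3 (dag3 (wf ω₀) * G ω₀)) (vec3 (dag3 (F ω₀) * G ω₀))

/-- The unique `μ₀ ∈ ℂ(j)` with `w(ω₀) = λ₀ F(ω₀) + μ₀ G(ω₀)`. -/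
def muJ (F G wf : Bicomplex → Bicomplex) (ω₀ : Bicomplex) : ℝ × ℝ :=
  -(hdiv (vec3 (dag3 (wf ω₀) * F ω₀)) (vec3 (dag3 (F ω₀) * G ω₀)))

/-- `w` has `(F,G)_j`-derivative `d` at `ω₀`. -/
def HasFGDerivJ (F G wf : Bicomplex → Bicomplex) (d ω₀ : Bicomplex) : Prop :=
  Tendsto
    (fun ω => (wf ω - ofHyp (lamJ F G wf ω₀) * F ω - ofHyp (muJ F G wf ω₀) * G ω) / (ω - ω₀))
    (𝓝[invertibleDiff ω₀] ω₀) (𝓝 d)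

/-- `w` is `(F,G)_j`-pseudoanalytic on `D`. -/
def PseudoanalyticJ (F G wf : Bicomplex → Bicomplex) (D : Set Bicomplex) : Prop :=
  ∀ ω ∈ D, ∃ d, HasFGDerivJ F G wf d ω

/-- `w` has continuous partial derivatives in a neighborhood of `ω₀`. -/
def HasContPartialsNear (f : Bicomplex → Bicomplex) (w₀ : Bicomplex) : Prop :=
  ∃ V ∈ 𝓝 w₀, ∀ e ∈ ({1, i1, i2, jj} : Set Bicomplex),
    (∀ w ∈ V, pdTExists e f w) ∧ ContinuousOn (pdT e f) V

/-! Characteristic coefficients with respect to the `†₂` conjugation (`i₁` case). -/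

def denom2 (F G : Bicomplex → Bicomplex) (w : Bicomplex) : Bicomplex :=
  F w * dag2 (G w) - dag2 (F w) * G w

def aCoef2₁ (F G : Bicomplex → Bicomplex) (w : Bicomplex) : Bicomplex :=
  -((dag1 (F w) * dOmDag1 G w - dOmDag1 F w * dag1 (G w)) / denom2 F G w)

def bCoef2₁ (F G : Bicomplex → Bicomplex) (w : Bicomplex) : Bicomplex :=
  (F w * dOmDag1 G w - dOmDag1 F w * G w) / denom2 F G w

def aCoef2₂ (F G : Bicomplex → Bicomplex) (w : Bicomplex) : Bicomplex :=
  -((dag2 (F w) * dOmBar G w - dOmBar F w * dag2 (G w)) / denom2 F G w)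

def bCoef2₂ (F G : Bicomplex → Bicomplex) (w : Bicomplex) : Bicomplex :=
  (F w * dOmBar G w - dOmBar F w * G w) / denom2 F G w

def aCoef2₃ (F G : Bicomplex → Bicomplex) (w : Bicomplex) : Bicomplex :=
  -((dag3 (F w) * dOmDag3 G w - dOmDag3 F w * dag3 (G w)) / denom2 F G w)

def bCoef2₃ (F G : Bicomplex → Bicomplex) (w : Bicomplex) : Bicomplex :=
  (F w * dOmDag3 G w - dOmDag3 F w * G w) / denom2 F G w

def Acoef2 (F G : Bicomplex → Bicomplex) (w : Bicomplex) : Bicomplex :=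
  -((dag2 (F w) * dOm G w - dOm F w * dag2 (G w)) / denom2 F G w)

def Bcoef2 (F G : Bicomplex → Bicomplex) (w : Bicomplex) : Bicomplex :=
  (F w * dOm G w - dOm F w * G w) / denom2 F G w

/-! Characteristic coefficients with respect to the `†₃` conjugation (`j` case). -/

def denom3 (F G : Bicomplex → Bicomplex) (w : Bicomplex) : Bicomplex :=
  F w * dag3 (G w) - dag3 (F w) * G w

def aCoef3₁ (F G : Bicomplex → Bicomplex) (w : Bicomplex) : Bicomplex :=
  -((dag1 (F w) * dOmDag1 G w - dOmDag1 F w * dag1 (G w)) / denom3 F G w)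

def bCoef3₁ (F G : Bicomplex → Bicomplex) (w : Bicomplex) : Bicomplex :=
  (F w * dOmDag1 G w - dOmDag1 F w * G w) / denom3 F G w

def aCoef3₂ (F G : Bicomplex → Bicomplex) (w : Bicomplex) : Bicomplex :=
  -((dag2 (F w) * dOmBar G w - dOmBar F w * dag2 (G w)) / denom3 F G w)

def bCoef3₂ (F G : Bicomplex → Bicomplex) (w : Bicomplex) : Bicomplex :=
  (F w * dOmBar G w - dOmBar F w * G w) / denom3 F G w

def aCoef3₃ (F G : Bicomplex → Bicomplex) (w : Bicomplex) : Bicomplex :=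
  -((dag3 (F w) * dOmDag3 G w - dOmDag3 F w * dag3 (G w)) / denom3 F G w)

def bCoef3₃ (F G : Bicomplex → Bicomplex) (w : Bicomplex) : Bicomplex :=
  (F w * dOmDag3 G w - dOmDag3 F w * G w) / denom3 F G w

def Acoef3 (F G : Bicomplex → Bicomplex) (w : Bicomplex) : Bicomplex :=
  -((dag3 (F w) * dOm G w - dOm F w * dag3 (G w)) / denom3 F G w)

def Bcoef3 (F G : Bicomplex → Bicomplex) (w : Bicomplex) : Bicomplex :=
  (F w * dOm G w - dOm F w * G w) / denom3 F G w

/-! Classical (Bers) pseudoanalytic function theory in `ℂ(i₁)`. -/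

/-- A complex (in `i₁`) generating pair on `D ⊆ ℂ(i₁)`. -/
def ComplexGenPair (Fe Ge : ℂ → ℂ) (D : Set ℂ) : Prop :=
  ContDiffOn ℝ 2 Fe D ∧ ContDiffOn ℝ 2 Ge D ∧
    ∀ z ∈ D, ((starRingEnd ℂ) (Fe z) * Ge z).im ≠ 0

/-- The unique real `λ₀` with `w(z₀) = λ₀ F(z₀) + μ₀ G(z₀)`. -/
def lamBers (Fe Ge we : ℂ → ℂ) (z₀ : ℂ) : ℝ :=
  ((starRingEnd ℂ) (we z₀) * Ge z₀).im / ((starRingEnd ℂ) (Fe z₀) * Ge z₀).im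

/-- The unique real `μ₀` with `w(z₀) = λ₀ F(z₀) + μ₀ G(z₀)`. -/
def muBers (Fe Ge we : ℂ → ℂ) (z₀ : ℂ) : ℝ :=
  -(((starRingEnd ℂ) (we z₀) * Fe z₀).im / ((starRingEnd ℂ) (Fe z₀) * Ge z₀).im)

/-- `w_e` has Bers `(F_e,G_e)`-derivative `d` at `z₀`. -/
def HasBersDerivAt (Fe Ge we : ℂ → ℂ) (d z₀ : ℂ) : Prop :=
  Tendsto
    (fun z => (we z - (lamBers Fe Ge we z₀ : ℂ) * Fe z - (muBers Fe Ge we z₀ : ℂ) * Ge z)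
        / (z - z₀))
    (𝓝[≠] z₀) (𝓝 d)

/-- `w_e` is `(F_e,G_e)`-pseudoanalytic (in the sense of Bers) on `D`. -/
def BersPseudoanalyticOn (Fe Ge we : ℂ → ℂ) (D : Set ℂ) : Prop :=
  ∀ z ∈ D, ∃ d, HasBersDerivAt Fe Ge we d z

/-- `∂_z̄ = ½(∂ₓ + i ∂_y)` for functions `ℂ(i₁) → ℂ(i₁)`. -/
def dzbarC (g : ℂ → ℂ) (z : ℂ) : ℂ :=
  (deriv (fun t : ℝ => g (z + t)) 0 + Complex.I * deriv (fun t : ℝ => g (z + t * Complex.I)) 0) / 2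

/-- The Bers characteristic coefficient `a_{(F_e,G_e)}`. -/
def aBers (Fe Ge : ℂ → ℂ) (z : ℂ) : ℂ :=
  -(((starRingEnd ℂ) (Fe z) * dzbarC Ge z - dzbarC Fe z * (starRingEnd ℂ) (Ge z)) /
    (Fe z * (starRingEnd ℂ) (Ge z) - (starRingEnd ℂ) (Fe z) * Ge z))

/-- The Bers characteristic coefficient `b_{(F_e,G_e)}`. -/
def bBers (Fe Ge : ℂ → ℂ) (z : ℂ) : ℂ :=
  (Fe z * dzbarC Ge z - dzbarC Fe z * Ge z) /
    (Fe z * (starRingEnd ℂ) (Ge z) - (starRingEnd ℂ) (Fe z) * Ge z)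

/-- `(F, G)` is the `i₂e`-generating pair associated to complex generating pairs
`(F_{e1}, G_{e1})` on `D₁` and `(F_{e2}, G_{e2})` on `D₂`. -/
def I2eGenPair (Fe1 Ge1 Fe2 Ge2 : ℂ → ℂ) (D₁ D₂ : Set ℂ)
    (F G : Bicomplex → Bicomplex) : Prop :=
  ComplexGenPair Fe1 Ge1 D₁ ∧ ComplexGenPair Fe2 Ge2 D₂ ∧
  (∀ w, F w = ofComplex (Fe1 (P1 w)) * e1 + ofComplex (Fe2 (P2 w)) * e2) ∧
  (∀ w, G w = ofComplex (Ge1 (P1 w)) * e1 + ofComplex (Ge2 (P2 w)) * e2)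

end Bicomplex

open Bicomplex

/-- If on `D₀` one of `Im{conj(F_{e1})G_{e1}}` and `Im{conj(F_{e2})G_{e2}}`
is nonzero at every point (where `F_{ek} = Pₖ ∘ F`, `G_{ek} = Pₖ ∘ G`), then
`Vec{F†₃G} ≠ 0` on `D₀`. -/
theorem vec3_ne_zero_of_idempotent_im_ne_zero (D₀ : Set Bicomplex)
    (F G : Bicomplex → Bicomplex)
    (h : ∀ ω ∈ D₀,
      ((starRingEnd ℂ) (P1 (F ω)) * P1 (G ω)).im ≠ 0 ∨
      ((starRingEnd ℂ) (P2 (F ω)) * P2 (G ω)).im ≠ 0) :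
    ∀ ω ∈ D₀, vec3 (dag3 (F ω) * G ω) ≠ 0 := by
  intro ω hω hvec
  have h0 := h ω hω
  rw [Prod.ext_iff] at hvec
  simp only [vec3, mul_z1, mul_z2, dag3, P1, P2, Prod.fst_zero, Prod.snd_zero,
    neg_eq_zero] at hvec
  rcases hvec with ⟨h1, h2⟩
  rcases h0 with h0 | h0 <;> apply h0 <;>
  · simp only [P1, P2, Complex.ext_iff, Complex.add_im, Complex.sub_im, Complex.mul_im,
      Complex.mul_re, Complex.conj_re, Complex.conj_im, Complex.sub_re, Complex.add_re,
      Complex.neg_re, Complex.neg_im,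
      Complex.I_re, Complex.I_im, Complex.zero_re, Complex.zero_im] at h1 h2 ⊢
    linarith [h1, h2]
end
end

section
/- Let D₀ = D₁ ×_e D₂ where D₁ and D₂ are open domains in ℂ(i₁). If (F, G) is an i₂e-generating pair on D₀, then (F, G) is in particular a j-generating pair on D₀, i.e. F and G are twice continuously differentiable on D₀ and Vec{F(ω)†₃G(ω)} ≠ 0 for all ω ∈ D₀. -/
noncomputable section

open Complex Filter Topology

open Bicomplex

namespace Bicomplex

lemma P1_mul' (u v : Bicomplex) : P1 (u * v) = P1 u * P1 v := by
  simp only [P1, mul_z1, mul_z2]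
  linear_combination (-(u.z2 * v.z2)) * Complex.I_sq

lemma P2_mul' (u v : Bicomplex) : P2 (u * v) = P2 u * P2 v := by
  simp only [P2, mul_z1, mul_z2]
  linear_combination (-(u.z2 * v.z2)) * Complex.I_sq

lemma P1_dag3' (w : Bicomplex) : P1 (dag3 w) = (starRingEnd ℂ) (P1 w) := by
  simp only [P1, dag3, map_sub, map_mul, Complex.conj_I]
  ring

lemma P1_comb (a b : ℂ) : P1 (ofComplex a * e1 + ofComplex b * e2) = a := by
  simp only [P1, ofComplex, e1, e2, add_z1, add_z2, mul_z1, mul_z2]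
  linear_combination ((b - a) / 2) * Complex.I_sq

lemma vec3_key (a1 b1 a2 b2 : ℂ) (hne : ((starRingEnd ℂ) a1 * a2).im ≠ 0) :
    vec3 (dag3 (ofComplex a1 * e1 + ofComplex b1 * e2) *
      (ofComplex a2 * e1 + ofComplex b2 * e2)) ≠ 0 := by
  intro h
  apply hne
  set X := dag3 (ofComplex a1 * e1 + ofComplex b1 * e2) *
      (ofComplex a2 * e1 + ofComplex b2 * e2) with hX
  have hp : P1 X = (starRingEnd ℂ) a1 * a2 := by
    rw [hX, P1_mul', P1_dag3', P1_comb, P1_comb]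
  have h1 : X.z1.im = 0 := congrArg Prod.fst h
  have h2 : -X.z2.re = 0 := congrArg Prod.snd h
  rw [← hp]
  simp only [P1, Complex.sub_im, Complex.mul_im, Complex.I_re, Complex.I_im]
  rw [h1]
  simp only [mul_one, mul_zero, add_zero, zero_sub, neg_eq_zero]
  linarith

lemma eProd_image (D₁ D₂ : Set ℂ) :
    toProd '' eProd D₁ D₂ =
      {p : ℂ × ℂ | p.1 - p.2 * Complex.I ∈ D₁ ∧ p.1 + p.2 * Complex.I ∈ D₂} := by
  ext p
  constructor
  · rintro ⟨w, ⟨h1, h2⟩, rfl⟩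
    exact ⟨h1, h2⟩
  · rintro ⟨h1, h2⟩
    exact ⟨⟨p.1, p.2⟩, ⟨h1, h2⟩, rfl⟩

lemma tContDiffOn_of_components (D₁ D₂ : Set ℂ) (He1 He2 : ℂ → ℂ)
    (h1 : ContDiffOn ℝ 2 He1 D₁) (h2 : ContDiffOn ℝ 2 He2 D₂)
    (H : Bicomplex → Bicomplex)
    (hH : ∀ w, H w = ofComplex (He1 (P1 w)) * e1 + ofComplex (He2 (P2 w)) * e2) :
    TContDiffOn 2 H (eProd D₁ D₂) := by
  unfold TContDiffOn
  rw [eProd_image]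
  set S : Set (ℂ × ℂ) :=
    {p : ℂ × ℂ | p.1 - p.2 * Complex.I ∈ D₁ ∧ p.1 + p.2 * Complex.I ∈ D₂} with hS
  have hL1 : ContDiff ℝ 2 (fun p : ℂ × ℂ => p.1 - p.2 * Complex.I) :=
    contDiff_fst.sub (contDiff_snd.mul contDiff_const)
  have hL2 : ContDiff ℝ 2 (fun p : ℂ × ℂ => p.1 + p.2 * Complex.I) :=
    contDiff_fst.add (contDiff_snd.mul contDiff_const)
  have hc : ContDiffOn ℝ 2 (fun p : ℂ × ℂ => He1 (p.1 - p.2 * Complex.I)) S :=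
    h1.comp hL1.contDiffOn (fun p hp => hp.1)
  have hd : ContDiffOn ℝ 2 (fun p : ℂ × ℂ => He2 (p.1 + p.2 * Complex.I)) S :=
    h2.comp hL2.contDiffOn (fun p hp => hp.2)
  have heq : fProd H = fun p : ℂ × ℂ =>
      ((He1 (p.1 - p.2 * Complex.I) + He2 (p.1 + p.2 * Complex.I)) / 2,
        (He1 (p.1 - p.2 * Complex.I) - He2 (p.1 + p.2 * Complex.I)) * Complex.I / 2) := by
    funext p
    simp only [fProd, hH, toProd, ofProd, ofComplex, e1, e2, P1, P2, add_z1, add_z2,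
      mul_z1, mul_z2, Prod.mk.injEq]
    constructor <;> ring
  rw [heq]
  exact ((hc.add hd).div_const 2).prodMk (((hc.sub hd).mul contDiffOn_const).div_const 2)

end Bicomplex

/-- An `i₂e`-generating pair on `D₀ = D₁ ×ₑ D₂` is in particular a
`j`-generating pair on `D₀`: `F` and `G` are twice continuously differentiable on `D₀` and
`Vec{F(ω)†₃G(ω)} ≠ 0` for all `ω ∈ D₀`. -/

theorem i2eGenPair_is_genPairJ (D₁ D₂ : Set ℂ)
    (hD₁ : IsOpen D₁) (hD₂ : IsOpen D₂) (hcD₁ : IsConnected D₁) (hcD₂ : IsConnected D₂)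
    (Fe1 Ge1 Fe2 Ge2 : ℂ → ℂ) (F G : Bicomplex → Bicomplex)
    (hFG : I2eGenPair Fe1 Ge1 Fe2 Ge2 D₁ D₂ F G) :
    GenPairJ F G (eProd D₁ D₂) := by
  obtain ⟨⟨hF1, hG1, hne1⟩, ⟨hF2, hG2, hne2⟩, hF, hG⟩ := hFG
  refine ⟨tContDiffOn_of_components D₁ D₂ Fe1 Fe2 hF1 hF2 F hF,
    tContDiffOn_of_components D₁ D₂ Ge1 Ge2 hG1 hG2 G hG, ?_⟩
  intro w hw
  rw [hF w, hG w]
  exact vec3_key _ _ _ _ (hne1 (P1 w) hw.1)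
end
end

section
/- Let f₀ : Ω ⊆ ℝ⁴ → ℂ(i₁) be a nonvanishing solution of the complexified Schrödinger equation (Δ_ℂ − ν(z₁, z₂))f₀ = 0, and let W be a solution of the bicomplex Vekua equation (∂_{ω†₂} − (∂_{ω†₂}f₀ / f₀)C)W = 0 on Ω. Then u = Sc(W) is a solution of (Δ_ℂ − ν)u = 0 on Ω, and v = Vec(W) is a solution of (Δ_ℂ + ν(z₁, z₂) − 2(|∇_ℂ f₀|_{i₁} / f₀)²)v = 0 on Ω, i.e. (Δ_ℂ − η)v = 0 with η = −ν + 2|∇_ℂ f₀|²_{i₁}/f₀². -/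
noncomputable section

open Complex Filter Topology

namespace VekuaAux
open Bicomplex


abbrev E := ℂ × ℂ

/-- Directional Wirtinger-type operator. -/
def Dv (a b : E) (G : E → ℂ) (p : E) : ℂ :=
  (fderiv ℝ G p a - Complex.I * fderiv ℝ G p b) / 2

lemma Dv_congr {G H : E → ℂ} {p : E} (h : G =ᶠ[𝓝 p] H) (a b : E) :
    Dv a b G p = Dv a b H p := by
  unfold Dv; rw [h.fderiv_eq]

lemma Dv_zero (a b p : E) : Dv a b (fun _ => (0:ℂ)) p = 0 := by
  simp [Dv]

lemma Dv_sub {G H : E → ℂ} {p : E} (hG : DifferentiableAt ℝ G p)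
    (hH : DifferentiableAt ℝ H p) (a b : E) :
    Dv a b (fun q => G q - H q) p = Dv a b G p - Dv a b H p := by
  unfold Dv
  rw [fderiv_fun_sub hG hH]
  simp only [ContinuousLinearMap.sub_apply]
  ring

lemma Dv_add {G H : E → ℂ} {p : E} (hG : DifferentiableAt ℝ G p)
    (hH : DifferentiableAt ℝ H p) (a b : E) :
    Dv a b (fun q => G q + H q) p = Dv a b G p + Dv a b H p := by
  unfold Dv
  rw [fderiv_fun_add hG hH]
  simp only [ContinuousLinearMap.add_apply]
  ring

lemma Dv_mul {G H : E → ℂ} {p : E} (hG : DifferentiableAt ℝ G p)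
    (hH : DifferentiableAt ℝ H p) (a b : E) :
    Dv a b (fun q => G q * H q) p = Dv a b G p * H p + G p * Dv a b H p := by
  unfold Dv
  rw [fderiv_fun_mul hG hH]
  simp only [ContinuousLinearMap.add_apply, ContinuousLinearMap.smul_apply, smul_eq_mul]
  ring

lemma Dv_neg (G : E → ℂ) (p a b : E) :
    Dv a b (fun q => -(G q)) p = -(Dv a b G p) := by
  unfold Dv
  rw [fderiv_fun_neg]
  simp only [ContinuousLinearMap.neg_apply]
  ring

/-- fderiv of directional derivative is second derivative applied. -/
lemma fderiv_dirderiv {G : E → ℂ} {p : E}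
    (hΦ : DifferentiableAt ℝ (fderiv ℝ G) p) (v u : E) :
    fderiv ℝ (fun q => fderiv ℝ G q v) p u = fderiv ℝ (fderiv ℝ G) p u v := by
  have h1 : HasFDerivAt (fun q => fderiv ℝ G q v)
      ((ContinuousLinearMap.apply ℝ ℂ v).comp (fderiv ℝ (fderiv ℝ G) p)) p :=
    (ContinuousLinearMap.apply ℝ ℂ v).hasFDerivAt.comp p hΦ.hasFDerivAt
  rw [h1.fderiv]
  rfl

lemma diff_dirderiv {G : E → ℂ} {p : E}
    (hΦ : DifferentiableAt ℝ (fderiv ℝ G) p) (v : E) :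
    DifferentiableAt ℝ (fun q => fderiv ℝ G q v) p :=
  ((ContinuousLinearMap.apply ℝ ℂ v).hasFDerivAt.comp p hΦ.hasFDerivAt).differentiableAt

lemma diff_Dv {G : E → ℂ} {p : E}
    (hΦ : DifferentiableAt ℝ (fderiv ℝ G) p) (a b : E) :
    DifferentiableAt ℝ (Dv a b G) p := by
  unfold Dv
  have h1 : DifferentiableAt ℝ (fun q => fderiv ℝ G q a - Complex.I * fderiv ℝ G q b) p :=
    (diff_dirderiv hΦ a).sub ((diff_dirderiv hΦ b).const_mul Complex.I)
  simp only [div_eq_mul_inv]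
  exact h1.mul_const _

lemma Dv_Dv {G : E → ℂ} {p : E}
    (hΦ : DifferentiableAt ℝ (fderiv ℝ G) p) (a b c d : E) :
    Dv a b (Dv c d G) p =
      (fderiv ℝ (fderiv ℝ G) p a c - Complex.I * fderiv ℝ (fderiv ℝ G) p a d
        - Complex.I * fderiv ℝ (fderiv ℝ G) p b c - fderiv ℝ (fderiv ℝ G) p b d) / 4 := by
  have hc := diff_dirderiv hΦ c
  have hd := diff_dirderiv hΦ d
  unfold Dv
  rw [show (fun q => (fderiv ℝ G q c - Complex.I * fderiv ℝ G q d) / 2)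
      = fun q => (fderiv ℝ G q c - Complex.I * fderiv ℝ G q d) / 2 from rfl]
  have e1 : fderiv ℝ (fun q => (fderiv ℝ G q c - Complex.I * fderiv ℝ G q d) / 2) p
      = ((2:ℂ)⁻¹) • (fderiv ℝ (fun q => fderiv ℝ G q c) p
          - Complex.I • fderiv ℝ (fun q => fderiv ℝ G q d) p) := by
    have : (fun q => (fderiv ℝ G q c - Complex.I * fderiv ℝ G q d) / 2)
        = fun q => (2:ℂ)⁻¹ • ((fderiv ℝ G q c) - Complex.I • (fderiv ℝ G q d)) := by
      funext q; simp [smul_eq_mul]; ring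
    rw [this, fderiv_fun_const_smul (by exact hc.sub (hd.const_smul Complex.I)) ((2:ℂ)⁻¹),
      fderiv_fun_sub hc (by exact hd.const_smul Complex.I :
        DifferentiableAt ℝ (fun q => Complex.I • fderiv ℝ G q d) p),
      fderiv_fun_const_smul hd Complex.I]
  rw [e1]
  simp only [ContinuousLinearMap.smul_apply, ContinuousLinearMap.sub_apply, smul_eq_mul,
    fderiv_dirderiv hΦ]
  ring_nf
  linear_combination ((fderiv ℝ (fderiv ℝ G) p b d) / 4) * Complex.I_sq

lemma Dv_swap {G : E → ℂ} {p : E}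
    (hG : ContDiffAt ℝ 2 G p) (a b c d : E) :
    Dv a b (Dv c d G) p = Dv c d (Dv a b G) p := by
  have hΦ : DifferentiableAt ℝ (fderiv ℝ G) p :=
    (hG.fderiv_right (m := 1) (by norm_num)).differentiableAt one_ne_zero
  have hsym : IsSymmSndFDerivAt ℝ G p := hG.isSymmSndFDerivAt (by norm_num)
  rw [Dv_Dv hΦ a b c d, Dv_Dv hΦ c d a b, hsym a c, hsym a d, hsym b c, hsym b d]
  ring


@[simp] lemma toProd_ofProd (p : E) : toProd (ofProd p) = p := rfl
@[simp] lemma toProd_one : toProd 1 = ((1:ℂ), (0:ℂ)) := rfl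
@[simp] lemma toProd_i1 : toProd i1 = (Complex.I, (0:ℂ)) := rfl
@[simp] lemma toProd_i2 : toProd i2 = ((0:ℂ), (1:ℂ)) := rfl
@[simp] lemma toProd_jj : toProd jj = ((0:ℂ), Complex.I) := rfl

lemma continuous_ofProd : Continuous ofProd := continuous_induced_rng.mpr continuous_id

lemma isOpen_image_toProd {Ω : Set Bicomplex} (hΩ : IsOpen Ω) : IsOpen (toProd '' Ω) := by
  have himg : toProd '' Ω = ofProd ⁻¹' Ω := by
    ext p
    constructor
    · rintro ⟨w, hw, rfl⟩; exact hw
    · intro hp; exact ⟨ofProd p, hp, rfl⟩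
  rw [himg]
  exact hΩ.preimage continuous_ofProd

lemma pd_eq (g : Bicomplex → ℂ) (e w : Bicomplex)
    (h : DifferentiableAt ℝ (fun q : E => g (ofProd q)) (toProd w)) :
    pd e g w = fderiv ℝ (fun q : E => g (ofProd q)) (toProd w) (toProd e) := by
  have key : (fun t : ℝ => g (w + Bicomplex.ofReal t * e))
      = (fun q : E => g (ofProd q)) ∘ (fun t : ℝ => toProd w + t • toProd e) := by
    funext t
    have h2 : w + Bicomplex.ofReal t * e = ofProd (toProd w + t • toProd e) := by
      ext <;> simp [Bicomplex.ofReal, ofProd, toProd, Complex.real_smul]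
    simp [h2, Function.comp]
  have hpath : HasDerivAt (fun t : ℝ => toProd w + t • toProd e) (toProd e) 0 := by
    simpa using ((hasDerivAt_id (0:ℝ)).smul_const (toProd e)).const_add (toProd w)
  have h' : DifferentiableAt ℝ (fun q : E => g (ofProd q))
      ((fun t : ℝ => toProd w + t • toProd e) 0) := by simpa using h
  have comp := h'.hasFDerivAt.comp_hasDerivAt 0 hpath
  unfold pd
  rw [key, comp.deriv]
  simp

def D1 (G : E → ℂ) : E → ℂ := Dv ((1:ℂ), (0:ℂ)) (Complex.I, (0:ℂ)) G
def D2 (G : E → ℂ) : E → ℂ := Dv ((0:ℂ), (1:ℂ)) ((0:ℂ), Complex.I) G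

lemma D1_def (G : E → ℂ) : Dv ((1:ℂ), (0:ℂ)) (Complex.I, (0:ℂ)) G = D1 G := rfl
lemma D2_def (G : E → ℂ) : Dv ((0:ℂ), (1:ℂ)) ((0:ℂ), Complex.I) G = D2 G := rfl

lemma dz_push {g : Bicomplex → ℂ} {G : E → ℂ} {S : Set E} (hS : IsOpen S) {p : E}
    (hp : p ∈ S) (hGdiff : DifferentiableAt ℝ G p)
    (heq : ∀ q ∈ S, g (ofProd q) = G q) :
    dz1 g (ofProd p) = D1 G p ∧ dz2 g (ofProd p) = D2 G p := by
  have hev : (fun q : E => g (ofProd q)) =ᶠ[𝓝 p] G :=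
    Filter.eventuallyEq_of_mem (hS.mem_nhds hp) heq
  have hdiff : DifferentiableAt ℝ (fun q : E => g (ofProd q)) p :=
    hGdiff.congr_of_eventuallyEq hev
  have hfd : fderiv ℝ (fun q : E => g (ofProd q)) p = fderiv ℝ G p := hev.fderiv_eq
  constructor
  · show (pd 1 g (ofProd p) - Complex.I * pd i1 g (ofProd p)) / 2 = _
    rw [pd_eq g 1 (ofProd p) hdiff, pd_eq g i1 (ofProd p) hdiff]
    simp only [toProd_ofProd, toProd_one, toProd_i1, hfd]
    rfl
  · show (pd i2 g (ofProd p) - Complex.I * pd jj g (ofProd p)) / 2 = _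
    rw [pd_eq g i2 (ofProd p) hdiff, pd_eq g jj (ofProd p) hdiff]
    simp only [toProd_ofProd, toProd_i2, toProd_jj, hfd]
    rfl

lemma div_ofComplex (w : Bicomplex) (c : ℂ) (hc : c ≠ 0) :
    w / ofComplex c = ⟨w.z1 / c, w.z2 / c⟩ := by
  show w * _ = _
  have hinv : (ofComplex c)⁻¹ = ⟨1 / c, 0⟩ := by
    show (⟨c / (c ^ 2 + 0 ^ 2), -(0:ℂ) / (c ^ 2 + 0 ^ 2)⟩ : Bicomplex) = _
    ext
    · simp only []
      field_simp
      ring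
    · simp
  rw [hinv]
  ext <;> simp <;> field_simp
@[simp] lemma ofProd_toProd (w : Bicomplex) : ofProd (toProd w) = w := rfl

@[simp] lemma sub_z1 (w v : Bicomplex) : (w - v).z1 = w.z1 - v.z1 := by
  show (w + -v).z1 = _
  simp [sub_eq_add_neg]

@[simp] lemma sub_z2 (w v : Bicomplex) : (w - v).z2 = w.z2 - v.z2 := by
  show (w + -v).z2 = _
  simp [sub_eq_add_neg]

lemma pd_const (e w : Bicomplex) (c : ℂ) : pd e (fun _ => c) w = 0 := by
  simp [pd]

lemma dz1_zero (w : Bicomplex) : dz1 (fun _ => (0:ℂ)) w = 0 := by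
  simp [dz1, pd_const]

lemma dz2_zero (w : Bicomplex) : dz2 (fun _ => (0:ℂ)) w = 0 := by
  simp [dz2, pd_const]

end VekuaAux

open Bicomplex

open VekuaAux

/-- Let `f₀` be a nonvanishing solution of the complexified Schrödinger
equation `(Δ_ℂ - ν)f₀ = 0` on `Ω` and let `W` solve the bicomplex Vekua equation
`(∂_{ω†₂} - (∂_{ω†₂}f₀/f₀)C)W = 0` on `Ω`. Then `u = Sc(W)` solves `(Δ_ℂ - ν)u = 0` and
`v = Vec(W)` solves `(Δ_ℂ - η)v = 0` with `η = -ν + 2|∇_ℂ f₀|²_{i₁}/f₀²`. -/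
theorem scalar_and_vector_parts_of_vekua_solution (Ω : Set Bicomplex) (hΩ : IsOpen Ω)
    (ν f₀ : Bicomplex → ℂ)
    (hf₀sm : CContDiffOn 2 f₀ Ω)
    (hf₀ne : ∀ w ∈ Ω, f₀ w ≠ 0)
    (hf₀sol : ∀ w ∈ Ω, lapC f₀ w - ν w * f₀ w = 0)
    (W : Bicomplex → Bicomplex) (hWsm : TContDiffOn 2 W Ω)
    (hW : ∀ w ∈ Ω,
      dOmBar W w -
        (dOmBar (fun u => ofComplex (f₀ u)) w / ofComplex (f₀ w)) * dag2 (W w) = 0) :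
    (∀ w ∈ Ω, lapC (fun u => (W u).z1) w - ν w * (W w).z1 = 0) ∧
    (∀ w ∈ Ω,
      lapC (fun u => (W u).z2) w -
        (-ν w + 2 * ((dz1 f₀ w) ^ 2 + (dz2 f₀ w) ^ 2) / (f₀ w) ^ 2) * (W w).z2 = 0) := by
  classical
  have hS : IsOpen (toProd '' Ω) := isOpen_image_toProd hΩ
  set S : Set E := toProd '' Ω with hSdef
  set F : E → ℂ := fun q => f₀ (ofProd q) with hFdef
  set U : E → ℂ := fun q => (W (ofProd q)).z1 with hUdef
  set V : E → ℂ := fun q => (W (ofProd q)).z2 with hVdef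
  have hF : ContDiffOn ℝ 2 F S := hf₀sm
  have hWp : ContDiffOn ℝ 2 (fProd W) S := hWsm
  have hU : ContDiffOn ℝ 2 U S := hWp.fst
  have hV : ContDiffOn ℝ 2 V S := hWp.snd
  have hmem : ∀ w ∈ Ω, toProd w ∈ S := fun w hw => ⟨w, hw, rfl⟩
  have hCA : ∀ {G : E → ℂ}, ContDiffOn ℝ 2 G S → ∀ p ∈ S, ContDiffAt ℝ 2 G p :=
    fun hG p hp => hG.contDiffAt (hS.mem_nhds hp)
  have hd : ∀ {G : E → ℂ}, ContDiffOn ℝ 2 G S → ∀ p ∈ S, DifferentiableAt ℝ G p :=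
    fun hG p hp => (hCA hG p hp).differentiableAt (by norm_num)
  have hΦ : ∀ {G : E → ℂ}, ContDiffOn ℝ 2 G S → ∀ p ∈ S,
      DifferentiableAt ℝ (fderiv ℝ G) p :=
    fun hG p hp =>
      ((hCA hG p hp).fderiv_right (m := 1) (by norm_num)).differentiableAt one_ne_zero
  have hdD1 : ∀ {G : E → ℂ}, ContDiffOn ℝ 2 G S → ∀ p ∈ S,
      DifferentiableAt ℝ (D1 G) p :=
    fun hG p hp => diff_Dv (hΦ hG p hp) _ _
  have hdD2 : ∀ {G : E → ℂ}, ContDiffOn ℝ 2 G S → ∀ p ∈ S,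
      DifferentiableAt ℝ (D2 G) p :=
    fun hG p hp => diff_Dv (hΦ hG p hp) _ _
  -- first-level conversions
  have cF : ∀ p ∈ S, dz1 f₀ (ofProd p) = D1 F p ∧ dz2 f₀ (ofProd p) = D2 F p :=
    fun p hp => dz_push hS hp (hd hF p hp) (fun q _ => rfl)
  have cU : ∀ p ∈ S, dz1 (fun u => (W u).z1) (ofProd p) = D1 U p ∧
      dz2 (fun u => (W u).z1) (ofProd p) = D2 U p :=
    fun p hp => dz_push hS hp (hd hU p hp) (fun q _ => rfl)
  have cV : ∀ p ∈ S, dz1 (fun u => (W u).z2) (ofProd p) = D1 V p ∧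
      dz2 (fun u => (W u).z2) (ofProd p) = D2 V p :=
    fun p hp => dz_push hS hp (hd hV p hp) (fun q _ => rfl)
  -- second-level conversions
  have cF1 : ∀ p ∈ S, dz1 (dz1 f₀) (ofProd p) = D1 (D1 F) p :=
    fun p hp => (dz_push hS hp (hdD1 hF p hp) (fun q hq => (cF q hq).1)).1
  have cF2 : ∀ p ∈ S, dz2 (dz2 f₀) (ofProd p) = D2 (D2 F) p :=
    fun p hp => (dz_push hS hp (hdD2 hF p hp) (fun q hq => (cF q hq).2)).2
  have cU1 : ∀ p ∈ S, dz1 (dz1 (fun u => (W u).z1)) (ofProd p) = D1 (D1 U) p :=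
    fun p hp => (dz_push hS hp (hdD1 hU p hp) (fun q hq => (cU q hq).1)).1
  have cU2 : ∀ p ∈ S, dz2 (dz2 (fun u => (W u).z1)) (ofProd p) = D2 (D2 U) p :=
    fun p hp => (dz_push hS hp (hdD2 hU p hp) (fun q hq => (cU q hq).2)).2
  have cV1 : ∀ p ∈ S, dz1 (dz1 (fun u => (W u).z2)) (ofProd p) = D1 (D1 V) p :=
    fun p hp => (dz_push hS hp (hdD1 hV p hp) (fun q hq => (cV q hq).1)).1
  have cV2 : ∀ p ∈ S, dz2 (dz2 (fun u => (W u).z2)) (ofProd p) = D2 (D2 V) p :=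
    fun p hp => (dz_push hS hp (hdD2 hV p hp) (fun q hq => (cV q hq).2)).2
  -- the Schrödinger equation on the Euclidean side
  have hlap : ∀ w ∈ Ω,
      D1 (D1 F) (toProd w) + D2 (D2 F) (toProd w) - ν w * F (toProd w) = 0 := by
    intro w hw
    have h := hf₀sol w hw
    have e1 : lapC f₀ w = dz1 (dz1 f₀) w + dz2 (dz2 f₀) w := rfl
    have a1 : dz1 (dz1 f₀) w = D1 (D1 F) (toProd w) := cF1 (toProd w) (hmem w hw)
    have a2 : dz2 (dz2 f₀) w = D2 (D2 F) (toProd w) := cF2 (toProd w) (hmem w hw)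
    have a3 : f₀ w = F (toProd w) := rfl
    rw [e1, a1, a2, a3] at h
    exact h
  -- the Vekua equation on the Euclidean side
  have hE : ∀ q ∈ S,
      (F q * (D1 U q - D2 V q) - (D1 F q * U q + D2 F q * V q) = 0) ∧
      (F q * (D1 V q + D2 U q) - (-(D1 F q * V q) + D2 F q * U q) = 0) := by
    rintro q ⟨w, hw, rfl⟩
    have h := hW w hw
    have hc : f₀ w ≠ 0 := hf₀ne w hw
    have e1 : dOmBar W w = ⟨(dz1 (s1 W) w - dz2 (s2 W) w) / 2,
        (dz1 (s2 W) w + dz2 (s1 W) w) / 2⟩ := by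
      ext <;> simp [dOmBar, dZ1, dZ2, i2, ofComplex] <;> ring
    have hs1 : (s1 fun u => ({ z1 := f₀ u, z2 := 0 } : Bicomplex)) = f₀ := rfl
    have hs2 : (s2 fun u => ({ z1 := f₀ u, z2 := 0 } : Bicomplex)) = fun _ => (0:ℂ) := rfl
    have e2 : dOmBar (fun u => ofComplex (f₀ u)) w = ⟨dz1 f₀ w / 2, dz2 f₀ w / 2⟩ := by
      ext <;> simp [dOmBar, dZ1, dZ2, i2, ofComplex, hs1, hs2, dz1_zero, dz2_zero] <;> ring
    have e3 : dag2 (W w) = ⟨(W w).z1, -(W w).z2⟩ := rfl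
    rw [e1, e2, e3, div_ofComplex _ _ hc] at h
    have h1 := congrArg Bicomplex.z1 h
    have h2 := congrArg Bicomplex.z2 h
    simp only [Bicomplex.add_z1, Bicomplex.add_z2, Bicomplex.mul_z1, Bicomplex.mul_z2,
      Bicomplex.neg_z1, Bicomplex.neg_z2, Bicomplex.zero_z1, Bicomplex.zero_z2,
      sub_z1, sub_z2] at h1 h2
    have r1 : dz1 (s1 W) w = D1 U (toProd w) := (cU (toProd w) (hmem w hw)).1
    have r2 : dz2 (s1 W) w = D2 U (toProd w) := (cU (toProd w) (hmem w hw)).2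
    have r3 : dz1 (s2 W) w = D1 V (toProd w) := (cV (toProd w) (hmem w hw)).1
    have r4 : dz2 (s2 W) w = D2 V (toProd w) := (cV (toProd w) (hmem w hw)).2
    have r5 : dz1 f₀ w = D1 F (toProd w) := (cF (toProd w) (hmem w hw)).1
    have r6 : dz2 f₀ w = D2 F (toProd w) := (cF (toProd w) (hmem w hw)).2
    have r7 : (W w).z1 = U (toProd w) := rfl
    have r8 : (W w).z2 = V (toProd w) := rfl
    have hc' : F (toProd w) ≠ 0 := hc
    have r0 : f₀ w = F (toProd w) := rfl
    simp only [r1, r2, r3, r4, r5, r6, r7, r8, r0] at h1 h2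
    field_simp [hc'] at h1 h2
    constructor
    · linear_combination h1
    · have hT : (2 * F (toProd w)) *
          (F (toProd w) * (D1 V (toProd w) + D2 U (toProd w)) -
            (-(D1 F (toProd w) * V (toProd w)) + D2 F (toProd w) * U (toProd w))) = 0 := by
        linear_combination 2 * F (toProd w) * h2
      exact (mul_eq_zero.mp hT).resolve_left (mul_ne_zero two_ne_zero hc')
  -- final computations
  constructor
  · intro w hw
    have hp : toProd w ∈ S := hmem w hw
    have hc' : F (toProd w) ≠ 0 := hf₀ne w hw
    have dF := hd hF (toProd w) hp
    have dU := hd hU (toProd w) hp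
    have dV := hd hV (toProd w) hp
    have dD1U := hdD1 hU (toProd w) hp
    have dD2U := hdD2 hU (toProd w) hp
    have dD1V := hdD1 hV (toProd w) hp
    have dD2V := hdD2 hV (toProd w) hp
    have dD1F := hdD1 hF (toProd w) hp
    have dD2F := hdD2 hF (toProd w) hp
    have hev1 : (fun q => F q * (D1 U q - D2 V q) - (D1 F q * U q + D2 F q * V q))
        =ᶠ[𝓝 (toProd w)] (fun _ => (0:ℂ)) :=
      Filter.eventuallyEq_of_mem (hS.mem_nhds hp) (fun q hq => (hE q hq).1)
    have hev2 : (fun q => F q * (D1 V q + D2 U q) - (-(D1 F q * V q) + D2 F q * U q))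
        =ᶠ[𝓝 (toProd w)] (fun _ => (0:ℂ)) :=
      Filter.eventuallyEq_of_mem (hS.mem_nhds hp) (fun q hq => (hE q hq).2)
    have h0A : Dv ((1:ℂ),(0:ℂ)) (Complex.I,(0:ℂ))
        (fun q => F q * (D1 U q - D2 V q) - (D1 F q * U q + D2 F q * V q)) (toProd w) = 0 := by
      rw [Dv_congr hev1]; exact Dv_zero _ _ _
    have h0B : Dv ((0:ℂ),(1:ℂ)) ((0:ℂ),Complex.I)
        (fun q => F q * (D1 V q + D2 U q) - (-(D1 F q * V q) + D2 F q * U q)) (toProd w) = 0 := by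
      rw [Dv_congr hev2]; exact Dv_zero _ _ _
    simp only [Dv_sub (dF.fun_mul (dD1U.fun_sub dD2V)) ((dD1F.fun_mul dU).fun_add (dD2F.fun_mul dV)),
      Dv_mul dF (dD1U.fun_sub dD2V), Dv_sub dD1U dD2V, Dv_add (dD1F.fun_mul dU) (dD2F.fun_mul dV),
      Dv_mul dD1F dU, Dv_mul dD2F dV, D1_def, D2_def] at h0A
    simp only [Dv_sub (dF.fun_mul (dD1V.fun_add dD2U)) (((dD1F.fun_mul dV).fun_neg).fun_add (dD2F.fun_mul dU)),
      Dv_mul dF (dD1V.fun_add dD2U), Dv_add dD1V dD2U,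
      Dv_add ((dD1F.fun_mul dV).fun_neg) (dD2F.fun_mul dU), Dv_neg,
      Dv_mul dD1F dV, Dv_mul dD2F dU, D1_def, D2_def] at h0B
    have swV : D2 (D1 V) (toProd w) = D1 (D2 V) (toProd w) :=
      Dv_swap (hCA hV (toProd w) hp) _ _ _ _
    have swF : D2 (D1 F) (toProd w) = D1 (D2 F) (toProd w) :=
      Dv_swap (hCA hF (toProd w) hp) _ _ _ _
    rw [swV, swF] at h0B
    have hlap' := hlap w hw
    have g1 : dz1 (dz1 (fun u => (W u).z1)) w = D1 (D1 U) (toProd w) := cU1 (toProd w) hp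
    have g2 : dz2 (dz2 (fun u => (W u).z1)) w = D2 (D2 U) (toProd w) := cU2 (toProd w) hp
    have g3 : (W w).z1 = U (toProd w) := rfl
    show dz1 (dz1 (fun u => (W u).z1)) w + dz2 (dz2 (fun u => (W u).z1)) w
      - ν w * (W w).z1 = 0
    rw [g1, g2, g3]
    have key : F (toProd w) *
        (D1 (D1 U) (toProd w) + D2 (D2 U) (toProd w) - ν w * U (toProd w)) = 0 := by
      linear_combination h0A + h0B + U (toProd w) * hlap'
    exact (mul_eq_zero.mp key).resolve_left hc'
  · intro w hw
    have hp : toProd w ∈ S := hmem w hw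
    have hc' : F (toProd w) ≠ 0 := hf₀ne w hw
    have dF := hd hF (toProd w) hp
    have dU := hd hU (toProd w) hp
    have dV := hd hV (toProd w) hp
    have dD1U := hdD1 hU (toProd w) hp
    have dD2U := hdD2 hU (toProd w) hp
    have dD1V := hdD1 hV (toProd w) hp
    have dD2V := hdD2 hV (toProd w) hp
    have dD1F := hdD1 hF (toProd w) hp
    have dD2F := hdD2 hF (toProd w) hp
    have hev1 : (fun q => F q * (D1 U q - D2 V q) - (D1 F q * U q + D2 F q * V q))
        =ᶠ[𝓝 (toProd w)] (fun _ => (0:ℂ)) :=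
      Filter.eventuallyEq_of_mem (hS.mem_nhds hp) (fun q hq => (hE q hq).1)
    have hev2 : (fun q => F q * (D1 V q + D2 U q) - (-(D1 F q * V q) + D2 F q * U q))
        =ᶠ[𝓝 (toProd w)] (fun _ => (0:ℂ)) :=
      Filter.eventuallyEq_of_mem (hS.mem_nhds hp) (fun q hq => (hE q hq).2)
    have h0C : Dv ((1:ℂ),(0:ℂ)) (Complex.I,(0:ℂ))
        (fun q => F q * (D1 V q + D2 U q) - (-(D1 F q * V q) + D2 F q * U q)) (toProd w) = 0 := by
      rw [Dv_congr hev2]; exact Dv_zero _ _ _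
    have h0D : Dv ((0:ℂ),(1:ℂ)) ((0:ℂ),Complex.I)
        (fun q => F q * (D1 U q - D2 V q) - (D1 F q * U q + D2 F q * V q)) (toProd w) = 0 := by
      rw [Dv_congr hev1]; exact Dv_zero _ _ _
    simp only [Dv_sub (dF.fun_mul (dD1V.fun_add dD2U)) (((dD1F.fun_mul dV).fun_neg).fun_add (dD2F.fun_mul dU)),
      Dv_mul dF (dD1V.fun_add dD2U), Dv_add dD1V dD2U,
      Dv_add ((dD1F.fun_mul dV).fun_neg) (dD2F.fun_mul dU), Dv_neg,
      Dv_mul dD1F dV, Dv_mul dD2F dU, D1_def, D2_def] at h0C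
    simp only [Dv_sub (dF.fun_mul (dD1U.fun_sub dD2V)) ((dD1F.fun_mul dU).fun_add (dD2F.fun_mul dV)),
      Dv_mul dF (dD1U.fun_sub dD2V), Dv_sub dD1U dD2V, Dv_add (dD1F.fun_mul dU) (dD2F.fun_mul dV),
      Dv_mul dD1F dU, Dv_mul dD2F dV, D1_def, D2_def] at h0D
    have swU : D2 (D1 U) (toProd w) = D1 (D2 U) (toProd w) :=
      Dv_swap (hCA hU (toProd w) hp) _ _ _ _
    have swF : D2 (D1 F) (toProd w) = D1 (D2 F) (toProd w) :=
      Dv_swap (hCA hF (toProd w) hp) _ _ _ _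
    rw [swU, swF] at h0D
    have hlap' := hlap w hw
    have hE1p := (hE (toProd w) hp).1
    have hE2p := (hE (toProd w) hp).2
    have g1 : dz1 (dz1 (fun u => (W u).z2)) w = D1 (D1 V) (toProd w) := cV1 (toProd w) hp
    have g2 : dz2 (dz2 (fun u => (W u).z2)) w = D2 (D2 V) (toProd w) := cV2 (toProd w) hp
    have g3 : (W w).z2 = V (toProd w) := rfl
    have q5 : dz1 f₀ w = D1 F (toProd w) := (cF (toProd w) hp).1
    have q6 : dz2 f₀ w = D2 F (toProd w) := (cF (toProd w) hp).2
    have q0 : f₀ w = F (toProd w) := rfl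
    show dz1 (dz1 (fun u => (W u).z2)) w + dz2 (dz2 (fun u => (W u).z2)) w
      - (-ν w + 2 * ((dz1 f₀ w) ^ 2 + (dz2 f₀ w) ^ 2) / (f₀ w) ^ 2) * (W w).z2 = 0
    rw [g1, g2, g3, q5, q6, q0]
    have key2 : F (toProd w) ^ 2 * (D1 (D1 V) (toProd w) + D2 (D2 V) (toProd w))
        + ν w * F (toProd w) ^ 2 * V (toProd w)
        - 2 * ((D1 F (toProd w)) ^ 2 + (D2 F (toProd w)) ^ 2) * V (toProd w) = 0 := by
      linear_combination F (toProd w) * h0C - F (toProd w) * h0D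
        + 2 * (D2 F (toProd w)) * hE1p - 2 * (D1 F (toProd w)) * hE2p
        - V (toProd w) * F (toProd w) * hlap'
    field_simp
    linear_combination key2
end
end
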